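/- The natural left I_n-module P_n is a simple and faithful I_n-module, and every faithful simple left I_n-module is isomorphic to P_n; thus P_n is, up to isomorphism, the only faithful simple I_n-module. -/

import Mathlib

set_option maxHeartbeats 1000000
set_option synthInstance.maxHeartbeats 400000


open MvPolynomial

/-- Multiplication by `x_i`, as a `K`-linear endomorphism of `K[x_1,…,x_n]`. -/
noncomputable def xOp (K : Type*) [Field K] (n : ℕ) (i : Fin n) :
    Module.End K (MvPolynomial (Fin n) K) :=
  LinearMap.mulLeft K (X i)

/-- The formal partial derivative `∂/∂x_i`. -/
noncomputable def dOp (K : Type*) [Field K] (n : ℕ) (i : Fin n) :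
    Module.End K (MvPolynomial (Fin n) K) :=
  (pderiv i).toLinearMap

/-- The integration operator `∫_i`, determined by `∫_i(x^α) = x^α·x_i/(α_i+1)`. -/
noncomputable def intOp (K : Type*) [Field K] (n : ℕ) (i : Fin n) :
    Module.End K (MvPolynomial (Fin n) K) :=
  (basisMonomials (Fin n) K).constr K
    (fun α => (((α i : ℕ) : K) + 1)⁻¹ • (monomial (α + Finsupp.single i 1) (1 : K)))

/-- The algebra `I_n` of polynomial integro-differential operators:
the `K`-subalgebra of `End_K(P_n)` generated by the `X_i`, `∂_i` and `∫_i`. -/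
noncomputable def IDO (K : Type*) [Field K] (n : ℕ) :
    Subalgebra K (Module.End K (MvPolynomial (Fin n) K)) :=
  Algebra.adjoin K (Set.range (xOp K n) ∪ Set.range (dOp K n) ∪ Set.range (intOp K n))

/-- `X_i` as an element of `I_n`. -/
noncomputable def xElt (K : Type*) [Field K] (n : ℕ) (i : Fin n) : IDO K n :=
  ⟨xOp K n i, Algebra.subset_adjoin (Or.inl (Or.inl ⟨i, rfl⟩))⟩

/-- `∂_i` as an element of `I_n`. -/
noncomputable def dElt (K : Type*) [Field K] (n : ℕ) (i : Fin n) : IDO K n :=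
  ⟨dOp K n i, Algebra.subset_adjoin (Or.inl (Or.inr ⟨i, rfl⟩))⟩

/-- `∫_i` as an element of `I_n`. -/
noncomputable def intElt (K : Type*) [Field K] (n : ℕ) (i : Fin n) : IDO K n :=
  ⟨intOp K n i, Algebra.subset_adjoin (Or.inr ⟨i, rfl⟩)⟩

/-- `P_n` is a module over `I_n` via the evaluation action of endomorphisms on polynomials. -/
noncomputable instance instModuleIDO (K : Type*) [Field K] (n : ℕ) :
    Module (IDO K n) (MvPolynomial (Fin n) K) :=
  Module.compHom (MvPolynomial (Fin n) K) (Subalgebra.val (IDO K n)).toRingHom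


namespace Aux
variable {K : Type*} [Field K] {n : ℕ}

lemma coeff_pderiv (i : Fin n) (β : Fin n →₀ ℕ) (p : MvPolynomial (Fin n) K) :
    coeff β (pderiv i p) = ((β i : ℕ) + 1 : K) * coeff (β + Finsupp.single i 1) p := by
  classical
  conv_lhs => rw [p.as_sum]
  rw [map_sum, MvPolynomial.coeff_sum]
  have key : ∀ γ ∈ p.support,
      coeff β (pderiv i (monomial γ (coeff γ p)))
        = if γ = β + Finsupp.single i 1 then ((β i : ℕ) + 1 : K) * coeff γ p else 0 := by
    intro γ _
    rw [pderiv_monomial, coeff_monomial]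
    by_cases h : γ = β + Finsupp.single i 1
    · subst h
      have h1 : β + Finsupp.single i 1 - Finsupp.single i 1 = β := by
        ext j
        rcases eq_or_ne j i with rfl | hj
        · simp
        · simp [Finsupp.single_apply, Ne.symm hj]
      have h2 : ((β + Finsupp.single i 1 : Fin n →₀ ℕ)) i = β i + 1 := by simp
      rw [h1, h2]
      simp only [if_pos rfl]
      push_cast; ring
    · rw [if_neg h]
      by_cases hs : γ - Finsupp.single i 1 = β
      · rw [if_pos hs]
        rcases Nat.eq_zero_or_pos (γ i) with h0 | h0
        · simp [h0]
        · exfalso; apply h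
          ext j
          have hsj := Finsupp.ext_iff.mp hs j
          simp only [Finsupp.add_apply]
          rcases eq_or_ne i j with rfl | hij
          · simp only [Finsupp.tsub_apply, Finsupp.single_eq_same] at hsj ⊢; omega
          · simp only [Finsupp.tsub_apply, Finsupp.single_eq_of_ne' hij] at hsj ⊢; omega
      · rw [if_neg hs]
  rw [Finset.sum_congr rfl key, Finset.sum_ite_eq' p.support _
    (fun γ => ((β i : ℕ) + 1 : K) * coeff γ p)]
  by_cases hα : β + Finsupp.single i 1 ∈ p.support
  · simp [hα]
  · rw [MvPolynomial.notMem_support_iff] at hα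
    simp [hα]

lemma intOp_monomial (i : Fin n) (β : Fin n →₀ ℕ) (c : K) :
    intOp K n i (monomial β c)
      = (((β i : ℕ) : K) + 1)⁻¹ • monomial (β + Finsupp.single i 1) c := by
  have hb : (monomial β c : MvPolynomial (Fin n) K) = c • basisMonomials (Fin n) K β := by
    rw [coe_basisMonomials]
    simp [smul_monomial]
  rw [hb, map_smul, intOp, Module.Basis.constr_basis]
  rw [smul_comm, smul_monomial, smul_eq_mul, mul_one]

lemma fOp_monomial [CharZero K] (i : Fin n) (β : Fin n →₀ ℕ) (c : K) :
    (1 - intOp K n i * dOp K n i) (monomial β c)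
      = if β i = 0 then monomial β c else 0 := by
  rw [LinearMap.sub_apply, Module.End.mul_apply, Module.End.one_apply]
  have hd : dOp K n i (monomial β c) = monomial (β - Finsupp.single i 1) ((β i : K) * c) := by
    simp [dOp, pderiv_monomial, mul_comm]
  rw [hd, intOp_monomial]
  rcases Nat.eq_zero_or_pos (β i) with h0 | h0
  · simp [h0]
  · rw [if_neg (by omega)]
    obtain ⟨k, hk⟩ : ∃ k, β i = k + 1 := ⟨β i - 1, by omega⟩
    have h1 : ((β - Finsupp.single i 1 : Fin n →₀ ℕ)) i = k := by
      simp [hk]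
    have h2 : β - Finsupp.single i 1 + Finsupp.single i 1 = β := by
      ext j
      rcases eq_or_ne i j with rfl | hij
      · simp only [Finsupp.add_apply, Finsupp.tsub_apply, Finsupp.single_eq_same]; omega
      · simp [Finsupp.single_eq_of_ne' hij]
    rw [h1, h2, smul_monomial]
    have h3 : ((k : K) + 1)⁻¹ • ((β i : K) * c) = c := by
      rw [smul_eq_mul, hk]
      push_cast
      rw [← mul_assoc, inv_mul_cancel₀ (Nat.cast_add_one_ne_zero k)]
      ring
    rw [h3, sub_self]

/-- The projection onto constants. -/
noncomputable def eOp (K : Type*) [Field K] (n : ℕ) :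
    Module.End K (MvPolynomial (Fin n) K) :=
  ((List.finRange n).map (fun i => 1 - intOp K n i * dOp K n i)).prod

lemma eOp_monomial [CharZero K] (β : Fin n →₀ ℕ) (c : K) :
    eOp K n (monomial β c) = if β = 0 then monomial β c else 0 := by
  have key : ∀ l : List (Fin n),
      ((l.map (fun i => 1 - intOp K n i * dOp K n i)).prod) (monomial β c)
        = if ∀ i ∈ l, β i = 0 then monomial β c else 0 := by
    intro l
    induction l with
    | nil => simp
    | cons a l ih =>
        rw [List.map_cons, List.prod_cons, Module.End.mul_apply, ih]
        by_cases hl : ∀ i ∈ l, β i = 0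
        · rw [if_pos hl, fOp_monomial]
          by_cases ha : β a = 0
          · rw [if_pos ha, if_pos]
            intro i hi
            rcases List.mem_cons.mp hi with rfl | h
            · exact ha
            · exact hl i h
          · rw [if_neg ha, if_neg]
            intro h
            exact ha (h a List.mem_cons_self)
        · rw [if_neg hl, map_zero, if_neg]
          intro h
          exact hl fun i hi => h i (List.mem_cons_of_mem a hi)
  unfold eOp
  rw [key]
  congr 1
  simp only [List.mem_finRange, true_implies]
  rw [eq_iff_iff]
  constructor
  · intro h; ext j; simp [h j]
  · intro h j; rw [h]; rfl

lemma eOp_apply [CharZero K] (p : MvPolynomial (Fin n) K) :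
    eOp K n p = coeff 0 p • 1 := by
  conv_lhs => rw [p.as_sum]
  rw [map_sum]
  have key : ∀ β ∈ p.support,
      eOp K n (monomial β (coeff β p)) = if β = 0 then monomial 0 (coeff β p) else 0 := by
    intro β _
    rw [eOp_monomial]
    split_ifs with h
    · rw [h]
    · rfl
  rw [Finset.sum_congr rfl key, Finset.sum_ite_eq' p.support 0 (fun β => monomial 0 (coeff β p))]
  have hone : (coeff 0 p) • (1 : MvPolynomial (Fin n) K) = monomial 0 (coeff 0 p) := by
    rw [smul_eq_C_mul, mul_one, ← monomial_zero']
  by_cases h0 : (0 : Fin n →₀ ℕ) ∈ p.support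
  · rw [if_pos h0, hone]
  · rw [MvPolynomial.notMem_support_iff] at h0
    rw [if_neg (by rwa [MvPolynomial.mem_support_iff, not_not] at *), h0, zero_smul]

lemma dOp_mem (i : Fin n) : dOp K n i ∈ IDO K n :=
  Algebra.subset_adjoin (Or.inl (Or.inr ⟨i, rfl⟩))

lemma intOp_mem (i : Fin n) : intOp K n i ∈ IDO K n :=
  Algebra.subset_adjoin (Or.inr ⟨i, rfl⟩)

lemma xOp_mem (i : Fin n) : xOp K n i ∈ IDO K n :=
  Algebra.subset_adjoin (Or.inl (Or.inl ⟨i, rfl⟩))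

lemma eOp_mem : eOp K n ∈ IDO K n := by
  apply list_prod_mem
  intro x hx
  simp only [List.mem_map] at hx
  obtain ⟨i, -, rfl⟩ := hx
  exact sub_mem (one_mem _) (mul_mem (intOp_mem i) (dOp_mem i))

lemma mulLeft_mem (p : MvPolynomial (Fin n) K) : LinearMap.mulLeft K p ∈ IDO K n := by
  have hp : p ∈ Algebra.adjoin K (Set.range (X : Fin n → MvPolynomial (Fin n) K)) := by
    rw [MvPolynomial.adjoin_range_X]; trivial
  induction hp using Algebra.adjoin_induction with
  | mem q hq =>
      obtain ⟨i, rfl⟩ := hq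
      exact xOp_mem i
  | algebraMap c =>
      have : LinearMap.mulLeft K (algebraMap K (MvPolynomial (Fin n) K) c)
          = algebraMap K (Module.End K (MvPolynomial (Fin n) K)) c := by
        apply LinearMap.ext; intro q
        simp [LinearMap.mulLeft_apply, Algebra.smul_def, Module.algebraMap_end_apply]
      rw [this]
      exact Subalgebra.algebraMap_mem _ c
  | add q r hq hr hq' hr' =>
      have h2 : LinearMap.mulLeft K (q + r) = LinearMap.mulLeft K q + LinearMap.mulLeft K r :=
        LinearMap.ext fun t => by simp [add_mul]
      rw [h2]
      exact add_mem hq' hr'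
  | mul q r hq hr hq' hr' =>
      rw [LinearMap.mulLeft_mul]
      exact mul_mem hq' hr'

lemma smul_def' (a : IDO K n) (p : MvPolynomial (Fin n) K) :
    a • p = (a : Module.End K (MvPolynomial (Fin n) K)) p := rfl

lemma exists_deriv [CharZero K] (d : ℕ) :
    ∀ (α : Fin n →₀ ℕ), (∑ i, α i) = d →
    ∀ p : MvPolynomial (Fin n) K, coeff α p ≠ 0 →
    ∃ D : IDO K n, coeff 0 ((D : Module.End K (MvPolynomial (Fin n) K)) p) ≠ 0 := by
  induction d with
  | zero =>
      intro α hα p hp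
      have h0 : α = 0 := by
        ext i
        have := (Finset.sum_eq_zero_iff.mp hα) i (Finset.mem_univ i)
        simpa using this
      exact ⟨1, by simpa [h0] using hp⟩
  | succ d ih =>
      intro α hα p hp
      have hex : ∃ i, α i ≠ 0 := by
        by_contra h
        push_neg at h
        simp [h] at hα
      obtain ⟨i, hi⟩ := hex
      set α' := α - Finsupp.single i 1 with hα'
      have hα'i : α' i = α i - 1 := by simp [hα']
      have hα'j : ∀ j, j ≠ i → α' j = α j := by
        intro j hj
        simp [hα', Finsupp.single_eq_of_ne' (Ne.symm hj)]
      have hsum : (∑ j, α' j) = d := by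
        have e1 := Finset.add_sum_erase Finset.univ (⇑α) (Finset.mem_univ i)
        have e2 := Finset.add_sum_erase Finset.univ (⇑α') (Finset.mem_univ i)
        have e3 : ∑ j ∈ Finset.univ.erase i, α' j = ∑ j ∈ Finset.univ.erase i, α j :=
          Finset.sum_congr rfl fun j hj => hα'j j (Finset.mem_erase.mp hj).1
        rw [← e2, e3, hα'i]
        have h4 := hα
        rw [← e1] at h4
        omega
      have hadd : α' + Finsupp.single i 1 = α := by
        ext j
        rcases eq_or_ne j i with rfl | hj
        · simp only [Finsupp.add_apply, Finsupp.single_eq_same, hα'i]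
          omega
        · simp [hα'j j hj, Finsupp.single_eq_of_ne' (Ne.symm hj)]
      have hc : coeff α' (dOp K n i p) ≠ 0 := by
        show coeff α' (pderiv i p) ≠ 0
        rw [coeff_pderiv, hadd]
        exact mul_ne_zero (Nat.cast_add_one_ne_zero _) hp
      obtain ⟨D, hD⟩ := ih α' hsum (dOp K n i p) hc
      refine ⟨D * dElt K n i, ?_⟩
      have : ((D * dElt K n i : IDO K n) : Module.End K (MvPolynomial (Fin n) K))
          = (D : Module.End K (MvPolynomial (Fin n) K)) * dOp K n i := rfl
      rw [this, Module.End.mul_apply]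
      exact hD

theorem isSimpleP [CharZero K] :
    IsSimpleModule (IDO K n) (MvPolynomial (Fin n) K) := by
  have : Nontrivial (Submodule (IDO K n) (MvPolynomial (Fin n) K)) := by
    refine ⟨⟨⊥, ⊤, fun h => ?_⟩⟩
    have h1 : (1 : MvPolynomial (Fin n) K) ∈ (⊥ : Submodule (IDO K n) (MvPolynomial (Fin n) K)) := by
      rw [h]; trivial
    exact one_ne_zero (Submodule.mem_bot _ |>.mp h1)
  suffices hso : IsSimpleOrder (Submodule (IDO K n) (MvPolynomial (Fin n) K)) from ⟨⟩
  refine ⟨fun N => ?_⟩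
  by_cases hN : N = ⊥
  · exact Or.inl hN
  right
  obtain ⟨p, hpN, hp0⟩ := Submodule.exists_mem_ne_zero_of_ne_bot hN
  obtain ⟨α, hα⟩ := MvPolynomial.support_nonempty.mpr hp0
  obtain ⟨D, hD⟩ := exists_deriv (∑ i, α i) α rfl p (MvPolynomial.mem_support_iff.mp hα)
  set c := coeff 0 ((D : Module.End K (MvPolynomial (Fin n) K)) p) with hc
  have h1 : (1 : MvPolynomial (Fin n) K) ∈ N := by
    have hq0 : (⟨eOp K n, eOp_mem⟩ : IDO K n) • (D • p) ∈ N :=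
      N.smul_mem _ (N.smul_mem _ hpN)
    have hq : c • (1 : MvPolynomial (Fin n) K) ∈ N := by
      have he : (⟨eOp K n, eOp_mem⟩ : IDO K n) • (D • p)
          = c • (1 : MvPolynomial (Fin n) K) := by
        rw [smul_def', smul_def']
        exact eOp_apply _
      rwa [he] at hq0
    have h2 : (algebraMap K (IDO K n) c⁻¹) • (c • (1 : MvPolynomial (Fin n) K)) = 1 := by
      rw [smul_def', Subalgebra.coe_algebraMap, Module.algebraMap_end_apply,
        smul_smul, inv_mul_cancel₀ hD, one_smul]
    rw [← h2]
    exact N.smul_mem _ hq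
  rw [Submodule.eq_top_iff']
  intro r
  have := N.smul_mem (⟨LinearMap.mulLeft K r, mulLeft_mem r⟩ : IDO K n) h1
  change (LinearMap.mulLeft K r) 1 ∈ N at this
  simpa [smul_def', LinearMap.mulLeft_apply] using this

theorem faithfulP : FaithfulSMul (IDO K n) (MvPolynomial (Fin n) K) :=
  ⟨fun {a b} h => Subtype.ext (LinearMap.ext fun p => h p)⟩

/-- Left multiplication as an element of `IDO`. -/
noncomputable def mulE (p : MvPolynomial (Fin n) K) : IDO K n :=
  ⟨LinearMap.mulLeft K p, mulLeft_mem p⟩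

lemma mulE_add (p q : MvPolynomial (Fin n) K) : mulE (p + q) = mulE p + mulE q := by
  apply Subtype.ext
  rw [Subalgebra.coe_add]
  apply LinearMap.ext
  intro t
  show (p + q) * t = p * t + q * t
  ring

lemma mulE_one : mulE (1 : MvPolynomial (Fin n) K) = 1 :=
  Subtype.ext (LinearMap.mulLeft_one K _)

lemma eE_mem : eOp K n ∈ IDO K n := eOp_mem

lemma mulE_smul_key [CharZero K] (a : IDO K n) (p : MvPolynomial (Fin n) K) :
    mulE (a • p) * ⟨eOp K n, eOp_mem⟩ = a * (mulE p * ⟨eOp K n, eOp_mem⟩) := by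
  apply Subtype.ext
  rw [Subalgebra.coe_mul, Subalgebra.coe_mul, Subalgebra.coe_mul]
  apply LinearMap.ext
  intro q
  simp only [Module.End.mul_apply]
  rw [eOp_apply q]
  show (a • p) * ((coeff 0 q) • 1) = (a : Module.End K (MvPolynomial (Fin n) K)) (p * ((coeff 0 q) • 1))
  rw [smul_def' a p]
  rw [mul_smul_comm, mul_one, mul_smul_comm, mul_one, map_smul]

end Aux


/-- The natural `I_n`-module `P_n` is simple and faithful, and every faithful simple
`I_n`-module is isomorphic to `P_n`. -/
theorem statement6 (K : Type*) [Field K] [CharZero K] (n : ℕ) :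
    IsSimpleModule (IDO K n) (MvPolynomial (Fin n) K) ∧
    FaithfulSMul (IDO K n) (MvPolynomial (Fin n) K) ∧
    ∀ (M : Type*) [AddCommGroup M] [Module (IDO K n) M],
      IsSimpleModule (IDO K n) M → FaithfulSMul (IDO K n) M →
      Nonempty (M ≃ₗ[IDO K n] MvPolynomial (Fin n) K) := by
  refine ⟨Aux.isSimpleP, Aux.faithfulP, ?_⟩
  intro M _ _ hsimp hfaith
  classical
  set eE : IDO K n := ⟨Aux.eOp K n, Aux.eOp_mem⟩ with heE
  have heOp_one : Aux.eOp K n (1 : MvPolynomial (Fin n) K) = 1 := by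
    rw [Aux.eOp_apply]
    simp
  have heE0 : eE ≠ 0 := by
    intro h
    have h2 : Aux.eOp K n (1 : MvPolynomial (Fin n) K) = 0 := by
      rw [show Aux.eOp K n = 0 from congrArg Subtype.val h]
      rfl
    rw [heOp_one] at h2
    exact one_ne_zero h2
  obtain ⟨m, hm⟩ : ∃ m : M, eE • m ≠ 0 := by
    by_contra h
    push_neg at h
    exact heE0 (hfaith.eq_of_smul_eq_smul (fun m => by rw [h m, zero_smul]))
  set m' := eE • m with hm'def
  have hEE : eE * eE = eE := by
    apply Subtype.ext
    rw [Subalgebra.coe_mul]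
    apply LinearMap.ext
    intro q
    rw [Module.End.mul_apply, Aux.eOp_apply q, map_smul, heOp_one]
  have hem' : eE • m' = m' := by rw [hm'def, ← mul_smul, hEE]
  let g : MvPolynomial (Fin n) K →ₗ[IDO K n] M := {
    toFun := fun p => Aux.mulE p • m'
    map_add' := fun p q => by
      show Aux.mulE (p + q) • m' = Aux.mulE p • m' + Aux.mulE q • m'
      rw [Aux.mulE_add, add_smul]
    map_smul' := fun a p => by
      show Aux.mulE (a • p) • m' = a • (Aux.mulE p • m')
      calc Aux.mulE (a • p) • m'
          = Aux.mulE (a • p) • (eE • m') := by rw [hem']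
        _ = (Aux.mulE (a • p) * eE) • m' := by rw [mul_smul]
        _ = (a * (Aux.mulE p * eE)) • m' := by rw [heE, Aux.mulE_smul_key]
        _ = a • (Aux.mulE p • (eE • m')) := by rw [mul_smul, mul_smul]
        _ = a • (Aux.mulE p • m') := by rw [hem'] }
  have hg1 : g 1 = m' := by
    show Aux.mulE (1 : MvPolynomial (Fin n) K) • m' = m'
    rw [Aux.mulE_one, one_smul]
  have hm'ne : m' ≠ 0 := hm
  have hrange : LinearMap.range g = ⊤ := by
    rcases hsimp.eq_bot_or_eq_top (LinearMap.range g) with h | h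
    · exfalso
      apply hm'ne
      have h3 : g 1 ∈ LinearMap.range g := LinearMap.mem_range_self g 1
      rw [h, Submodule.mem_bot] at h3
      rwa [hg1] at h3
    · exact h
  have hker : LinearMap.ker g = ⊥ := by
    rcases (Aux.isSimpleP (K := K) (n := n)).eq_bot_or_eq_top (LinearMap.ker g) with h | h
    · exact h
    · exfalso
      apply hm'ne
      have h3 : (1 : MvPolynomial (Fin n) K) ∈ LinearMap.ker g := by rw [h]; trivial
      rw [LinearMap.mem_ker, hg1] at h3
      exact h3
  have hinj : Function.Injective g := by
    intro x y hxy
    have hxy2 : x - y ∈ LinearMap.ker g := by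
      rw [LinearMap.mem_ker, map_sub, hxy, sub_self]
    rw [hker, Submodule.mem_bot] at hxy2
    exact sub_eq_zero.mp hxy2
  have hsur : Function.Surjective g := by
    intro y
    have hy : y ∈ LinearMap.range g := by rw [hrange]; trivial
    exact hy
  have hbij : Function.Bijective g := ⟨hinj, hsur⟩
  exact ⟨(LinearEquiv.ofBijective g hbij).symm⟩
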